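/- Let m > 1, d ≥ 1, κ > 0, and consider E[ρ] = (1/(m-1))∫_{S^d} ρ^m dS - (κ/2)||c_ρ||² + κ/2 on absolutely continuous probability densities on S^d. If ρ is a global minimizer of E and R is a rotation of S^d fixing c_ρ, then R_#ρ = ρ; consequently every global minimizer is invariant under all rotations preserving its centre of mass. -/

import Mathlib

open MeasureTheory

/-- Let `m > 1`, `d ≥ 1`, `κ > 0`, and consider the energy
`E[ρ] = (1/(m-1)) ∫ ρ^m dS - (κ/2)‖c_ρ‖² + κ/2` on absolutely continuous probability
densities on `S^d`. If `ρ` is a global minimizer of `E` and `R` is a rotation of `S^d`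
fixing `c_ρ`, then the pushforward density `ρ ∘ R⁻¹` coincides with `ρ`
(almost everywhere with respect to the surface measure); consequently every global
minimizer is invariant under all rotations preserving its centre of mass. -/
theorem stmt_19 (d : ℕ) (hd : 1 ≤ d) (m κ : ℝ) (hm : 1 < m) (hκ : 0 < κ)
    (μ : Measure (EuclideanSpace ℝ (Fin (d + 1))))
    (hμ : μ = (μH[(d : ℝ)]).restrict (Metric.sphere (0 : EuclideanSpace ℝ (Fin (d + 1))) 1))
    (E : (EuclideanSpace ℝ (Fin (d + 1)) → ℝ) → ℝ)
    (hE : ∀ ρ : EuclideanSpace ℝ (Fin (d + 1)) → ℝ,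
      E ρ = (1 / (m - 1)) * (∫ x, ρ x ^ m ∂μ)
        - (κ / 2) * ‖∫ x, ρ x • x ∂μ‖ ^ 2 + κ / 2)
    (ρ : EuclideanSpace ℝ (Fin (d + 1)) → ℝ)
    (hρ0 : ∀ x, 0 ≤ ρ x) (hρint : Integrable ρ μ)
    (hρm : Integrable (fun x => ρ x ^ m) μ)
    (hρ1 : ∫ x, ρ x ∂μ = 1)
    (hmin : ∀ σ : EuclideanSpace ℝ (Fin (d + 1)) → ℝ,
      (∀ x, 0 ≤ σ x) → Integrable σ μ → Integrable (fun x => σ x ^ m) μ →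
      (∫ x, σ x ∂μ) = 1 → E ρ ≤ E σ)
    (R : EuclideanSpace ℝ (Fin (d + 1)) ≃ₗᵢ[ℝ] EuclideanSpace ℝ (Fin (d + 1)))
    (hR : R (∫ x, ρ x • x ∂μ) = ∫ x, ρ x • x ∂μ) :
    (fun x => ρ (R.symm x)) =ᵐ[μ] ρ := by
  have hmeas : Measurable (⇑R.symm) := R.symm.continuous.measurable
  -- R.symm is measure preserving
  have hmp : MeasurePreserving (⇑R.symm) μ μ := by
    rw [hμ]
    have hS : (⇑R.symm) ⁻¹' (Metric.sphere (0 : EuclideanSpace ℝ (Fin (d + 1))) 1)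
        = Metric.sphere 0 1 := by
      ext x
      simp [mem_sphere_zero_iff_norm, R.symm.norm_map]
    constructor
    · exact hmeas
    · have h1 : Measure.map (⇑R.symm) (μH[(d : ℝ)]) = μH[(d : ℝ)] :=
        R.symm.toIsometryEquiv.map_hausdorffMeasure _
      have h2 := Measure.restrict_map hmeas
        (Metric.isClosed_sphere.measurableSet :
          MeasurableSet (Metric.sphere (0 : EuclideanSpace ℝ (Fin (d + 1))) 1))
        (μ := μH[(d : ℝ)])
      rw [h1, hS] at h2
      exact h2.symm
  have hemb : MeasurableEmbedding (⇑R.symm) :=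
    (R.symm.toHomeomorph : EuclideanSpace ℝ (Fin (d + 1)) ≃ₜ _).measurableEmbedding
  set τ : EuclideanSpace ℝ (Fin (d + 1)) → ℝ := fun x => ρ (R.symm x) with hτdef
  have hτ0 : ∀ x, 0 ≤ τ x := fun x => hρ0 _
  have hτint : Integrable τ μ := (hmp.integrable_comp_emb hemb).mpr hρint
  have hτ1 : ∫ x, τ x ∂μ = 1 := (hmp.integral_comp hemb ρ).trans hρ1
  have hτmint : Integrable (fun x => τ x ^ m) μ :=
    (hmp.integrable_comp_emb hemb).mpr hρm
  have hτm : ∫ x, τ x ^ m ∂μ = ∫ x, ρ x ^ m ∂μ :=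
    hmp.integral_comp hemb (fun y => ρ y ^ m)
  -- a.e. points lie on the sphere
  have hae : ∀ᵐ x ∂μ, ‖x‖ = 1 := by
    rw [hμ]
    exact (ae_restrict_mem Metric.isClosed_sphere.measurableSet).mono
      fun x hx => mem_sphere_zero_iff_norm.mp hx
  have hg_int : Integrable (fun x => ρ x • x) μ := by
    refine Integrable.mono' hρint
      (hρint.aestronglyMeasurable.smul aestronglyMeasurable_id) ?_
    filter_upwards [hae] with x hx
    rw [norm_smul, hx, mul_one, Real.norm_eq_abs, abs_of_nonneg (hρ0 x)]
  have hτg_int : Integrable (fun x => τ x • x) μ := by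
    refine Integrable.mono' hτint
      (hτint.aestronglyMeasurable.smul aestronglyMeasurable_id) ?_
    filter_upwards [hae] with x hx
    rw [norm_smul, hx, mul_one, Real.norm_eq_abs, abs_of_nonneg (hτ0 x)]
  -- centre of mass of τ equals that of ρ
  have hcenter : ∫ x, τ x • x ∂μ = ∫ x, ρ x • x ∂μ := by
    have h0 := hmp.integral_comp hemb (fun y => ρ y • (R y))
    simp only [LinearIsometryEquiv.apply_symm_apply] at h0
    have h2 := (R.toLinearIsometry).integral_comp_comm (μ := μ) (fun z => ρ z • z)
    simp only [LinearIsometryEquiv.coe_toLinearIsometry] at h2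
    calc ∫ x, τ x • x ∂μ = ∫ x, ρ (R.symm x) • x ∂μ := rfl
      _ = ∫ y, ρ y • (R y) ∂μ := h0
      _ = ∫ y, R (ρ y • y) ∂μ := by simp only [_root_.map_smul]
      _ = R (∫ x, ρ x • x ∂μ) := h2
      _ = ∫ x, ρ x • x ∂μ := hR
  -- midpoint density
  set σ : EuclideanSpace ℝ (Fin (d + 1)) → ℝ := fun x => (ρ x + τ x) / 2 with hσdef
  have hσ0 : ∀ x, 0 ≤ σ x := fun x => by
    have h1 := hρ0 x; have h2 := hτ0 x; positivity
  have hσint : Integrable σ μ := (hρint.add hτint).div_const 2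
  have hσ1 : ∫ x, σ x ∂μ = 1 := by
    simp only [hσdef]
    rw [integral_div, integral_add hρint hτint, hρ1, hτ1]
    norm_num
  have hm0 : (0:ℝ) < m := lt_trans zero_lt_one hm
  have hQ : Integrable (fun x => (ρ x ^ m + τ x ^ m) / 2) μ := (hρm.add hτmint).div_const 2
  have hconv : ∀ x, σ x ^ m ≤ (ρ x ^ m + τ x ^ m) / 2 := by
    intro x
    have h := (strictConvexOn_rpow hm).convexOn.2
      (Set.mem_Ici.mpr (hρ0 x)) (Set.mem_Ici.mpr (hτ0 x))
      (by norm_num : (0:ℝ) ≤ 1/2) (by norm_num : (0:ℝ) ≤ 1/2) (by norm_num)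
    have e1 : (1/2 : ℝ) • ρ x + (1/2 : ℝ) • τ x = σ x := by
      simp [hσdef, smul_eq_mul]; ring
    rw [e1] at h
    calc σ x ^ m ≤ (1/2 : ℝ) • ρ x ^ m + (1/2 : ℝ) • τ x ^ m := h
      _ = (ρ x ^ m + τ x ^ m) / 2 := by simp [smul_eq_mul]; ring
  have hσm_int : Integrable (fun x => σ x ^ m) μ := by
    refine Integrable.mono' hQ
      ((Real.continuous_rpow_const hm0.le).comp_aestronglyMeasurable
        hσint.aestronglyMeasurable) ?_
    filter_upwards with x
    rw [Real.norm_eq_abs, abs_of_nonneg (Real.rpow_nonneg (hσ0 x) m)]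
    exact hconv x
  have hσcenter : ∫ x, σ x • x ∂μ = ∫ x, ρ x • x ∂μ := by
    have h1 : (fun x => σ x • x)
        = fun x => (2⁻¹ : ℝ) • (ρ x • x) + (2⁻¹ : ℝ) • (τ x • x) := by
      funext x
      rw [smul_smul, smul_smul, ← add_smul]
      congr 1
      simp [hσdef]; ring
    have hA : Integrable (fun x => (2⁻¹ : ℝ) • (ρ x • x)) μ := hg_int.smul (2⁻¹ : ℝ)
    have hB : Integrable (fun x => (2⁻¹ : ℝ) • (τ x • x)) μ := hτg_int.smul (2⁻¹ : ℝ)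
    rw [h1, integral_add hA hB, integral_smul, integral_smul,
      hcenter, ← smul_add]
    rw [show (∫ x, ρ x • x ∂μ) + (∫ x, ρ x • x ∂μ) = (2:ℝ) • ∫ x, ρ x • x ∂μ from
      (two_smul ℝ _).symm, smul_smul]
    norm_num
  -- the integrals of the m-th powers agree
  have ha : (0:ℝ) < 1 / (m - 1) := by
    have : (0:ℝ) < m - 1 := sub_pos.mpr hm
    positivity
  have hint_le : ∫ x, σ x ^ m ∂μ ≤ ∫ x, ρ x ^ m ∂μ := by
    calc ∫ x, σ x ^ m ∂μ ≤ ∫ x, (ρ x ^ m + τ x ^ m) / 2 ∂μ :=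
          integral_mono hσm_int hQ hconv
      _ = ∫ x, ρ x ^ m ∂μ := by
          rw [integral_div, integral_add hρm hτmint, hτm]; ring
  have key : ∫ x, σ x ^ m ∂μ = ∫ x, ρ x ^ m ∂μ := by
    have h1 := hmin σ hσ0 hσint hσm_int hσ1
    rw [hE σ, hE ρ, hσcenter] at h1
    have h2 : (1 / (m - 1)) * ∫ x, ρ x ^ m ∂μ
        ≤ (1 / (m - 1)) * ∫ x, σ x ^ m ∂μ := by linarith
    have h3 := le_of_mul_le_mul_left h2 ha
    linarith
  -- the defect function vanishes a.e.
  have hh_int : Integrable (fun x => (ρ x ^ m + τ x ^ m) / 2 - σ x ^ m) μ :=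
    hQ.sub hσm_int
  have hh0 : ∀ x, 0 ≤ (ρ x ^ m + τ x ^ m) / 2 - σ x ^ m :=
    fun x => sub_nonneg.mpr (hconv x)
  have hhzero : (fun x => (ρ x ^ m + τ x ^ m) / 2 - σ x ^ m) =ᵐ[μ] 0 := by
    rw [← integral_eq_zero_iff_of_nonneg hh0 hh_int,
      integral_sub hQ hσm_int, key,
      integral_div, integral_add hρm hτmint, hτm]
    ring
  filter_upwards [hhzero] with x hx
  simp only [Pi.zero_apply] at hx
  show τ x = ρ x
  by_contra hne
  have hs := (strictConvexOn_rpow hm).2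
    (Set.mem_Ici.mpr (hρ0 x)) (Set.mem_Ici.mpr (hτ0 x)) (Ne.symm hne)
    (by norm_num : (0:ℝ) < 1/2) (by norm_num : (0:ℝ) < 1/2) (by norm_num)
  have e1 : (1/2 : ℝ) • ρ x + (1/2 : ℝ) • τ x = σ x := by
    simp [hσdef, smul_eq_mul]; ring
  rw [e1] at hs
  simp only [smul_eq_mul] at hs
  linarith
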